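/- Let e : ZFSet ≃ ZFSet be a permutation of the universe of ZFC sets that fixes every finite set, i.e., e s = s whenever s.toSet is finite. Then π-ordered-pairs are absolute: for all x y : ZFSet, e.symm {e.symm {x}, e.symm {x, y}} = ZFSet.pair x y, i.e., the interpretation of the Kuratowski ordered pair of x and y in the permuted model (V, ∈_π), where u ∈_π v iff u ∈ e v, equals the standard Kuratowski pair {{x},{x,y}}. -/

import Mathlib

/-- **Lemma 3.4(i)**: If a permutation `e` of the universe of ZFC sets fixes every
finite set, then π-ordered-pairs are absolute: the interpretation of the Kuratowski
pair of `x` and `y` in the permuted model `(V, ∈_π)` (where `u ∈_π v ↔ u ∈ e v`)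
equals the standard Kuratowski pair `{{x}, {x, y}}`. -/
theorem pi_pair_absolute (e : ZFSet ≃ ZFSet)
    (he : ∀ s : ZFSet, s.toSet.Finite → e s = s) :
    ∀ x y : ZFSet, e.symm {e.symm {x}, e.symm {x, y}} = ZFSet.pair x y := by
  have hsymm : ∀ s : ZFSet, s.toSet.Finite → e.symm s = s := fun s hs => by
    conv_lhs => rw [← he s hs]
    exact e.symm_apply_apply s
  have hins : ∀ a b : ZFSet, (insert a ({b} : ZFSet)).toSet.Finite := fun a b => by
    rw [show (insert a ({b} : ZFSet)).toSet = insert a {b} from by ext z; change z ∈ (insert a ({b} : ZFSet)) ↔ _; simp [ZFSet.mem_insert_iff, ZFSet.mem_singleton]]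
    exact (Set.finite_singleton b).insert a
  have hsing : ∀ a : ZFSet, ({a} : ZFSet).toSet.Finite := fun a => by
    rw [show ({a} : ZFSet).toSet = {a} from by ext z; change z ∈ ({a} : ZFSet) ↔ _; simp [ZFSet.mem_singleton]]; exact Set.finite_singleton a
  intro x y
  rw [hsymm _ (hsing x), hsymm _ (hins x y), hsymm _ (hins _ _)]
  rfl
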